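/- Let 1 < p < 2, u_p(x) = |x|^{(p-2)/(p-1)} on R², x = (x₁, 0) with x₁ > 0, and 0 < ε < x₁. Then the median of u_p over the circle ∂B_ε(x) equals (x₁² + ε²)^{(p-2)/(2(p-1))}. -/

import Mathlib

open MeasureTheory Real Filter Asymptotics Metric Set Topology

/-- Partial derivative ∂u/∂x_i. -/
noncomputable def pd {N : ℕ} (u : EuclideanSpace ℝ (Fin N) → ℝ) (i : Fin N)
    (x : EuclideanSpace ℝ (Fin N)) : ℝ :=
  fderiv ℝ u x (EuclideanSpace.single i 1)

/-- Second partial derivative ∂²u/∂x_i∂x_j. -/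
noncomputable def pd2 {N : ℕ} (u : EuclideanSpace ℝ (Fin N) → ℝ) (i j : Fin N)
    (x : EuclideanSpace ℝ (Fin N)) : ℝ :=
  pd (pd u j) i x

/-- The norm of the gradient |Du(x)|. -/
noncomputable def gradNorm {N : ℕ} (u : EuclideanSpace ℝ (Fin N) → ℝ)
    (x : EuclideanSpace ℝ (Fin N)) : ℝ :=
  Real.sqrt (∑ i, (pd u i x) ^ 2)

/-- The Laplacian Δu. -/
noncomputable def lap {N : ℕ} (u : EuclideanSpace ℝ (Fin N) → ℝ)
    (x : EuclideanSpace ℝ (Fin N)) : ℝ :=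
  ∑ i, pd2 u i i x

/-- The infinity-Laplacian Δ_∞ u = |Du|⁻² Σ ∂_i u ∂_j u ∂_ij u. -/
noncomputable def infLap {N : ℕ} (u : EuclideanSpace ℝ (Fin N) → ℝ)
    (x : EuclideanSpace ℝ (Fin N)) : ℝ :=
  (∑ i, ∑ j, pd u i x * pd u j x * pd2 u i j x) / (gradNorm u x) ^ 2

/-- The p-Laplacian Δ_p u = div(|Du|^{p-2} Du). -/
noncomputable def pLap {N : ℕ} (p : ℝ) (u : EuclideanSpace ℝ (Fin N) → ℝ)
    (x : EuclideanSpace ℝ (Fin N)) : ℝ :=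
  ∑ i, pd (fun y => gradNorm u y ^ (p - 2) * pd u i y) i x

/-- The 1-Laplacian Δ_1 u = |Du| div(Du/|Du|). -/
noncomputable def oneLap {N : ℕ} (u : EuclideanSpace ℝ (Fin N) → ℝ)
    (x : EuclideanSpace ℝ (Fin N)) : ℝ :=
  gradNorm u x * ∑ i, pd (fun y => pd u i y / gradNorm u y) i x

/-- The point x + ε(cos θ, sin θ) on the circle ∂B_ε(x). -/
noncomputable def circlePt (x : EuclideanSpace ℝ (Fin 2)) (ε θ : ℝ) :
    EuclideanSpace ℝ (Fin 2) :=
  x + ε • (EuclideanSpace.single 0 (Real.cos θ) + EuclideanSpace.single 1 (Real.sin θ))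

/-- The average of u over the circle ∂B_ε(x). -/
noncomputable def circleAvg (u : EuclideanSpace ℝ (Fin 2) → ℝ)
    (x : EuclideanSpace ℝ (Fin 2)) (ε : ℝ) : ℝ :=
  (2 * Real.pi)⁻¹ * ∫ θ in (0:ℝ)..(2 * Real.pi), u (circlePt x ε θ)

/-- m is a median of u over the circle ∂B_ε(x): the arc-length measures of the
sets where u ≥ m and u ≤ m coincide. -/
def IsCircleMedian (u : EuclideanSpace ℝ (Fin 2) → ℝ)
    (x : EuclideanSpace ℝ (Fin 2)) (ε m : ℝ) : Prop :=
  volume {θ ∈ Set.Ico (0:ℝ) (2 * Real.pi) | m ≤ u (circlePt x ε θ)} =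
  volume {θ ∈ Set.Ico (0:ℝ) (2 * Real.pi) | u (circlePt x ε θ) ≤ m}

/-- the median of the fundamental solution over ∂B_ε((x₁,0)). -/
theorem fundamental_solution_median (p : ℝ) (hp1 : 1 < p) (hp2 : p < 2)
    (x₁ ε : ℝ) (hx : 0 < x₁) (hε : 0 < ε) (hεx : ε < x₁) :
    IsCircleMedian (fun y => ‖y‖ ^ ((p - 2) / (p - 1)))
      (EuclideanSpace.single 0 x₁) ε
      ((x₁ ^ 2 + ε ^ 2) ^ ((p - 2) / (2 * (p - 1)))) := by
  have hπ := Real.pi_pos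
  set α : ℝ := (p - 2) / (p - 1) with hα
  have hαneg : α < 0 := div_neg_of_neg_of_pos (by linarith) (by linarith)
  -- norm of the circle point
  have hnorm : ∀ θ : ℝ, ‖circlePt (EuclideanSpace.single 0 x₁) ε θ‖
      = Real.sqrt (x₁^2 + ε^2 + 2*x₁*ε*Real.cos θ) := by
    intro θ
    rw [EuclideanSpace.norm_eq, Fin.sum_univ_two]
    congr 1
    simp [circlePt, EuclideanSpace.single_apply, Real.norm_eq_abs, mul_pow, sq_abs]
    nlinarith [sin_sq_add_cos_sq θ]
  have hqpos : ∀ θ : ℝ, 0 < x₁^2 + ε^2 + 2*x₁*ε*Real.cos θ := fun θ => by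
    nlinarith [neg_one_le_cos θ, sq_nonneg (x₁ - ε), mul_pos hx hε]
  have hspos : (0:ℝ) < x₁^2 + ε^2 := by positivity
  -- rewrite the median value
  have hm : (x₁ ^ 2 + ε ^ 2) ^ ((p-2)/(2*(p-1))) = Real.sqrt (x₁^2 + ε^2) ^ α := by
    have hne : p - 1 ≠ 0 := by linarith
    have he : (p - 2) / (2 * (p - 1)) = (1/2) * α := by
      rw [hα]; field_simp
    rw [he, Real.rpow_mul hspos.le, ← Real.sqrt_eq_rpow]
  -- characterize the two sets
  have key : ∀ θ : ℝ, ((x₁ ^ 2 + ε ^ 2) ^ ((p-2)/(2*(p-1)))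
      ≤ ‖circlePt (EuclideanSpace.single 0 x₁) ε θ‖ ^ α ↔ Real.cos θ ≤ 0) := by
    intro θ
    rw [hm, hnorm θ,
      Real.rpow_le_rpow_iff_of_neg (Real.sqrt_pos.2 hspos) (Real.sqrt_pos.2 (hqpos θ)) hαneg,
      Real.sqrt_le_sqrt_iff hspos.le]
    constructor
    · intro h; nlinarith [mul_pos hx hε]
    · intro h; nlinarith [mul_pos hx hε]
  have key2 : ∀ θ : ℝ, (‖circlePt (EuclideanSpace.single 0 x₁) ε θ‖ ^ α
      ≤ (x₁ ^ 2 + ε ^ 2) ^ ((p-2)/(2*(p-1))) ↔ 0 ≤ Real.cos θ) := by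
    intro θ
    rw [hm, hnorm θ,
      Real.rpow_le_rpow_iff_of_neg (Real.sqrt_pos.2 (hqpos θ)) (Real.sqrt_pos.2 hspos) hαneg,
      Real.sqrt_le_sqrt_iff (hqpos θ).le]
    constructor
    · intro h; nlinarith [mul_pos hx hε]
    · intro h; nlinarith [mul_pos hx hε]
  unfold IsCircleMedian
  have hA : {θ ∈ Set.Ico (0:ℝ) (2*π) |
      (x₁ ^ 2 + ε ^ 2) ^ ((p-2)/(2*(p-1)))
        ≤ (fun y => ‖y‖ ^ ((p - 2) / (p - 1))) (circlePt (EuclideanSpace.single 0 x₁) ε θ)}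
      = Set.Icc (π/2) (3*π/2) := by
    ext θ
    simp only [mem_setOf_eq, mem_Ico, mem_Icc, ← hα, key θ]
    constructor
    · rintro ⟨⟨h0, h2⟩, hc⟩
      constructor
      · by_contra h
        push_neg at h
        exact absurd (Real.cos_pos_of_mem_Ioo ⟨by linarith, h⟩) (not_lt.2 hc)
      · by_contra h
        push_neg at h
        have : 0 < Real.cos θ := by
          rw [← Real.cos_sub_two_pi]
          exact Real.cos_pos_of_mem_Ioo ⟨by linarith, by linarith⟩
        linarith
    · rintro ⟨h1, h2⟩
      exact ⟨⟨by linarith, by linarith⟩,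
        Real.cos_nonpos_of_pi_div_two_le_of_le h1 (by linarith)⟩
  have hB : {θ ∈ Set.Ico (0:ℝ) (2*π) |
      (fun y => ‖y‖ ^ ((p - 2) / (p - 1))) (circlePt (EuclideanSpace.single 0 x₁) ε θ)
        ≤ (x₁ ^ 2 + ε ^ 2) ^ ((p-2)/(2*(p-1)))}
      = Set.Icc 0 (π/2) ∪ Set.Ico (3*π/2) (2*π) := by
    ext θ
    simp only [mem_setOf_eq, mem_Ico, mem_Icc, mem_union, ← hα, key2 θ]
    constructor
    · rintro ⟨⟨h0, h2⟩, hc⟩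
      rcases le_or_gt θ (π/2) with h | h
      · exact Or.inl ⟨h0, h⟩
      · refine Or.inr ⟨?_, h2⟩
        by_contra hh
        push_neg at hh
        exact absurd (Real.cos_neg_of_pi_div_two_lt_of_lt h (by linarith)) (not_lt.2 hc)
    · rintro (⟨h1, h2⟩ | ⟨h1, h2⟩)
      · exact ⟨⟨h1, by linarith⟩, Real.cos_nonneg_of_mem_Icc ⟨by linarith, h2⟩⟩
      · refine ⟨⟨by linarith, h2⟩, ?_⟩
        rw [← Real.cos_sub_two_pi]
        exact Real.cos_nonneg_of_mem_Icc ⟨by linarith, by linarith⟩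
  rw [hA, hB]
  rw [measure_union (by rw [Set.disjoint_left]; rintro θ ⟨_, h2⟩ ⟨h3, _⟩; linarith)
    measurableSet_Ico]
  rw [Real.volume_Icc, Real.volume_Icc, Real.volume_Ico,
    ← ENNReal.ofReal_add (by linarith) (by linarith)]
  ring_nf
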